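/- Let n ≥ 2 point masses m_1,…,m_n > 0 be placed at positions q_i = (x_i, y_i) ∈ ℝ², and for each pair i < j let v_{i,j} ∈ ℝ^{2n} be the twist vector whose only nonzero components are (v_{i,j})_{x_i} = m_j(y_i − y_j), (v_{i,j})_{y_i} = −m_j(x_i − x_j), (v_{i,j})_{x_j} = −m_i(y_i − y_j), (v_{i,j})_{y_j} = m_i(x_i − x_j). If the n points are not all collinear, then the dimension of the linear span of the set of all twist vectors {v_{i,j} : 1 ≤ i < j ≤ n} is exactly 2n − 3. -/

import Mathlib

noncomputable section

open Finset

/-- A point in the Euclidean plane with the given coordinates. -/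
def pt (a b : ℝ) : EuclideanSpace ℝ (Fin 2) := (WithLp.equiv 2 (Fin 2 → ℝ)).symm ![a, b]

/-- The configuration space of `n` planar points, identified with `ℝ^{2n}`. -/
abbrev Conf (n : ℕ) := Fin n → EuclideanSpace ℝ (Fin 2)

/-- The twist vector `v_{i,j}`: its only nonzero components are
`(v_{i,j})_{x_i} = m_j (y_i - y_j)`, `(v_{i,j})_{y_i} = -m_j (x_i - x_j)`,
`(v_{i,j})_{x_j} = -m_i (y_i - y_j)`, `(v_{i,j})_{y_j} = m_i (x_i - x_j)`. -/
def twist {n : ℕ} (m : Fin n → ℝ) (q : Conf n) (i j : Fin n) : Conf n :=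
  fun k =>
    if k = i then pt (m j * (q i 1 - q j 1)) (-(m j * (q i 0 - q j 0)))
    else if k = j then pt (-(m i * (q i 1 - q j 1))) (m i * (q i 0 - q j 0))
    else 0

/-- The dot product on the configuration space `ℝ^{2n}`. -/
def dot {n : ℕ} (v w : Conf n) : ℝ := ∑ k, ∑ t, v k t * w k t

/-- Twice the signed area `Λ_{i,j,k}` of the triangle `q_i q_j q_k`. -/
def lam {n : ℕ} (q : Conf n) (i j k : Fin n) : ℝ :=
  (q i 0 - q j 0) * (q i 1 - q k 1) - (q i 0 - q k 0) * (q i 1 - q j 1)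

/-- The moment of inertia about the center of mass. -/
def Ifun {n : ℕ} (m : Fin n → ℝ) (q : Conf n) : ℝ :=
  ∑ i, m i * ‖q i - (∑ i, m i)⁻¹ • ∑ j, m j • q j‖ ^ 2

/-- The homogeneous potential `U = ∑_{i<j} m_i m_j r_{i,j}^{2-A}`. -/
def Ufun {n : ℕ} (A : ℝ) (m : Fin n → ℝ) (q : Conf n) : ℝ :=
  ∑ p ∈ Finset.univ.filter (fun p : Fin n × Fin n => p.1 < p.2),
    m p.1 * m p.2 * ‖q p.1 - q p.2‖ ^ (2 - A)

/-- `f = M I / 2 + U / (A - 2)`. -/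
def fFun {n : ℕ} (A : ℝ) (m : Fin n → ℝ) (q : Conf n) : ℝ :=
  (∑ i, m i) * Ifun m q / 2 + Ufun A m q / (A - 2)

/-- The Hessian of `f` at `q`, as a bilinear form: `v ᵀ H w`. -/
def hess {n : ℕ} (A : ℝ) (m : Fin n → ℝ) (q : Conf n) (v w : Conf n) : ℝ :=
  fderiv ℝ (fderiv ℝ (fFun A m)) q v w

section AuxTwist

@[simp] lemma pt_zero (a b : ℝ) : pt a b 0 = a := rfl
@[simp] lemma pt_one (a b : ℝ) : pt a b 1 = b := rfl
@[simp] lemma zero_app (t : Fin 2) : (0 : EuclideanSpace ℝ (Fin 2)) t = 0 := rfl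

lemma twist_self1 {n : ℕ} (m : Fin n → ℝ) (q : Conf n) (i j : Fin n) :
    twist m q i j i = pt (m j * (q i 1 - q j 1)) (-(m j * (q i 0 - q j 0))) := by
  simp [twist]
lemma twist_self2 {n : ℕ} (m : Fin n → ℝ) (q : Conf n) {i j : Fin n} (h : j ≠ i) :
    twist m q i j j = pt (-(m i * (q i 1 - q j 1))) (m i * (q i 0 - q j 0)) := by
  simp [twist, h]
lemma twist_other {n : ℕ} (m : Fin n → ℝ) (q : Conf n) {i j k : Fin n}
    (h1 : k ≠ i) (h2 : k ≠ j) : twist m q i j k = 0 := by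
  simp [twist, h1, h2]

def ev {n : ℕ} (k : Fin n) (t : Fin 2) : Conf n →ₗ[ℝ] ℝ where
  toFun v := v k t
  map_add' _ _ := rfl
  map_smul' _ _ := rfl

lemma solve2 {s t u0 u1 v0 v1 : ℝ} (hd : u0 * v1 - u1 * v0 ≠ 0)
    (h0 : s * u0 + t * v0 = 0) (h1 : s * u1 + t * v1 = 0) : s = 0 ∧ t = 0 := by
  constructor
  · have h : s * (u0 * v1 - u1 * v0) = 0 := by linear_combination v1 * h0 - v0 * h1
    exact (mul_eq_zero.mp h).resolve_right hd
  · have h : t * (u0 * v1 - u1 * v0) = 0 := by linear_combination u0 * h1 - u1 * h0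
    exact (mul_eq_zero.mp h).resolve_right hd

def D3 {n : ℕ} (q : Conf n) (a b c : Fin n) : ℝ :=
  (q b 0 - q a 0) * (q c 1 - q a 1) - (q b 1 - q a 1) * (q c 0 - q a 0)

lemma exists_triple {n : ℕ} (q : Conf n) (hn : 2 ≤ n) (hq : ¬ Collinear ℝ (Set.range q)) :
    ∃ a b c : Fin n,
      (q b 0 - q a 0) * (q c 1 - q a 1) - (q b 1 - q a 1) * (q c 0 - q a 0) ≠ 0 := by
  by_contra h
  push_neg at h
  apply hq
  have a0 : Fin n := ⟨0, by omega⟩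
  rw [collinear_iff_of_mem (Set.mem_range_self a0)]
  by_cases hall : ∀ k, q k = q a0
  · exact ⟨0, by rintro p ⟨k, rfl⟩; exact ⟨0, by simp [hall k]⟩⟩
  · push_neg at hall
    obtain ⟨b, hb⟩ := hall
    refine ⟨q b - q a0, ?_⟩
    rintro p ⟨k, rfl⟩
    have hD := h a0 b k
    by_cases h0 : q b 0 - q a0 0 ≠ 0
    · refine ⟨(q k 0 - q a0 0) / (q b 0 - q a0 0), ?_⟩
      ext t
      fin_cases t <;>
        simp only [vadd_eq_add, PiLp.add_apply, PiLp.smul_apply, PiLp.sub_apply, smul_eq_mul,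
          Fin.zero_eta, Fin.mk_one, Fin.isValue] <;>
        field_simp <;>
        first
          | ring1
          | linear_combination hD
          | linear_combination -hD
          | linear_combination 2*hD
          | linear_combination -2*hD
    · push_neg at h0
      have h1 : q b 1 - q a0 1 ≠ 0 := by
        intro h1
        apply hb
        ext t
        fin_cases t <;> simp only [Fin.zero_eta, Fin.mk_one, Fin.isValue] <;> linarith [h0, h1]
      refine ⟨(q k 1 - q a0 1) / (q b 1 - q a0 1), ?_⟩
      ext t
      fin_cases t <;>
        simp only [vadd_eq_add, PiLp.add_apply, PiLp.smul_apply, PiLp.sub_apply, smul_eq_mul,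
          Fin.zero_eta, Fin.mk_one, Fin.isValue] <;>
        field_simp <;>
        first
          | ring1
          | linear_combination hD
          | linear_combination -hD
          | linear_combination 2*hD
          | linear_combination -2*hD

lemma sum_pair {α : Type*} [Fintype α] [DecidableEq α] {i j : α} (hij : i ≠ j) (f g : α → ℝ) :
    ∑ k, (if k = i then f k else if k = j then g k else 0) = f i + g j := by
  have h : (fun k => if k = i then f k else if k = j then g k else 0)
      = fun k => (if k = i then f k else 0) + (if k = j then g k else 0) := by
    funext k
    split_ifs with h1 h2 <;> simp_all
  rw [h, Finset.sum_add_distrib, Finset.sum_ite_eq' Finset.univ i f,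
    Finset.sum_ite_eq' Finset.univ j g]
  simp

def Phi {n : ℕ} (m : Fin n → ℝ) (q : Conf n) : Conf n →ₗ[ℝ] (Fin 3 → ℝ) where
  toFun v := ![∑ k, m k * v k 0, ∑ k, m k * v k 1,
    ∑ k, m k * (q k 0 * v k 0 + q k 1 * v k 1)]
  map_add' v w := by
    funext t
    fin_cases t <;>
      simp [← Finset.sum_add_distrib, mul_add] <;> congr 1 <;> funext k <;> ring
  map_smul' r v := by
    funext t
    fin_cases t <;>
      simp [Finset.mul_sum, mul_add] <;> congr 1 <;> funext k <;> ring

def sing {n : ℕ} (i : Fin n) (x : EuclideanSpace ℝ (Fin 2)) : Conf n :=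
  fun k => if k = i then x else 0

lemma Phi_sing {n : ℕ} (m : Fin n → ℝ) (q : Conf n) (i : Fin n) (x : EuclideanSpace ℝ (Fin 2)) :
    Phi m q (sing i x) = ![m i * x 0, m i * x 1, m i * (q i 0 * x 0 + q i 1 * x 1)] := by
  have hs : ∀ (f : Fin n → ℝ) (t : Fin 2),
      ∑ k, f k * (sing i x k t) = f i * x t := by
    intro f t
    have : ∀ k, f k * (sing i x k t) = if k = i then f k * x t else 0 := by
      intro k
      unfold sing
      split_ifs <;> simp
    rw [Finset.sum_congr rfl fun k _ => this k, Finset.sum_ite_eq' Finset.univ i]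
    simp
  funext t
  fin_cases t
  · exact hs m 0
  · exact hs m 1
  · show ∑ k, m k * (q k 0 * sing i x k 0 + q k 1 * sing i x k 1) = _
    have h2 : ∀ k, m k * (q k 0 * sing i x k 0 + q k 1 * sing i x k 1)
        = if k = i then m k * (q k 0 * x 0 + q k 1 * x 1) else 0 := by
      intro k
      unfold sing
      split_ifs <;> simp
    rw [Finset.sum_congr rfl fun k _ => h2 k,
      Finset.sum_ite_eq' Finset.univ i (fun k => m k * (q k 0 * x 0 + q k 1 * x 1))]
    simp

lemma finrank_conf (n : ℕ) : Module.finrank ℝ (Conf n) = 2 * n := by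
  simp [Module.finrank_pi_fintype, finrank_euclideanSpace_fin, mul_comm]

lemma Phi_twist {n : ℕ} (m : Fin n → ℝ) (q : Conf n) {i j : Fin n} (hij : i ≠ j) :
    Phi m q (twist m q i j) = 0 := by
  have key : ∀ (F : Fin n → ℝ → ℝ → ℝ), (∀ k, F k 0 0 = 0) →
      (∑ k, F k (twist m q i j k 0) (twist m q i j k 1)) =
        F i (m j * (q i 1 - q j 1)) (-(m j * (q i 0 - q j 0)))
        + F j (-(m i * (q i 1 - q j 1))) (m i * (q i 0 - q j 0)) := by
    intro F hF
    rw [← sum_pair hij (fun k => F k (m j * (q i 1 - q j 1)) (-(m j * (q i 0 - q j 0))))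
      (fun k => F k (-(m i * (q i 1 - q j 1))) (m i * (q i 0 - q j 0)))]
    apply Finset.sum_congr rfl
    intro k _
    unfold twist
    split_ifs <;> simp [hF]
  funext t
  fin_cases t
  · show (∑ k, m k * (twist m q i j k 0 : ℝ)) = 0
    rw [key (fun k x y => m k * x) (by intro k; ring)]
    ring
  · show (∑ k, m k * (twist m q i j k 1 : ℝ)) = 0
    rw [key (fun k x y => m k * y) (by intro k; ring)]
    ring
  · show (∑ k, m k * (q k 0 * twist m q i j k 0 + q k 1 * twist m q i j k 1)) = 0
    rw [key (fun k x y => m k * (q k 0 * x + q k 1 * y)) (by intro k; ring)]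
    ring

lemma finrank_ker {n : ℕ} (m : Fin n → ℝ) (hm : ∀ i, 0 < m i) (q : Conf n)
    {a b : Fin n} (hab : q a 0 ≠ q b 0 ∨ q a 1 ≠ q b 1) :
    Module.finrank ℝ (LinearMap.ker (Phi m q)) = 2 * n - 3 := by
  have hma := (hm a).ne'
  have hmb := (hm b).ne'
  have hrange : Module.finrank ℝ (LinearMap.range (Phi m q)) = 3 := by
    refine le_antisymm ?_ ?_
    · simpa using Submodule.finrank_le (LinearMap.range (Phi m q))
    · obtain ⟨u1, u2, u3, h1, h2, h3, hind⟩ :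
          ∃ u1 u2 u3 : Fin 3 → ℝ, u1 ∈ LinearMap.range (Phi m q) ∧
            u2 ∈ LinearMap.range (Phi m q) ∧ u3 ∈ LinearMap.range (Phi m q) ∧
            LinearIndependent ℝ ![u1, u2, u3] := by
        rcases hab with hab | hab
        · refine ⟨_, _, _, ⟨sing a (pt 1 0), rfl⟩, ⟨sing b (pt 1 0), rfl⟩,
            ⟨sing a (pt 0 1), rfl⟩, ?_⟩
          rw [Fintype.linearIndependent_iff]
          intro g hg
          have e0 := congrFun hg 0
          have e1 := congrFun hg 1
          have e2 := congrFun hg 2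
          simp [Phi_sing, Fin.sum_univ_three] at e0 e1 e2
          have hg2 : g 2 = 0 := e1.resolve_right hma
          have hg0 : g 0 = 0 := by
            have : g 0 * (m a * (q a 0 - q b 0)) = 0 := by
              linear_combination e2 - q b 0 * e0 - (m a * q a 1) * hg2
            rcases mul_eq_zero.mp this with h | h
            · exact h
            · exact absurd h (by intro hh; rcases mul_eq_zero.mp hh with h' | h' <;> [exact hma h'; exact hab (by linarith)])
          have hg1 : g 1 = 0 := by
            have : g 1 * m b = 0 := by linear_combination e0 - m a * hg0
            rcases mul_eq_zero.mp this with h | h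
            · exact h
            · exact absurd h hmb
          intro i
          fin_cases i <;> assumption
        · refine ⟨_, _, _, ⟨sing a (pt 0 1), rfl⟩, ⟨sing b (pt 0 1), rfl⟩,
            ⟨sing a (pt 1 0), rfl⟩, ?_⟩
          rw [Fintype.linearIndependent_iff]
          intro g hg
          have e0 := congrFun hg 0
          have e1 := congrFun hg 1
          have e2 := congrFun hg 2
          simp [Phi_sing, Fin.sum_univ_three] at e0 e1 e2
          have hg2 : g 2 = 0 := e0.resolve_right hma
          have hg0 : g 0 = 0 := by
            have : g 0 * (m a * (q a 1 - q b 1)) = 0 := by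
              linear_combination e2 - q b 1 * e1 - (m a * q a 0) * hg2
            rcases mul_eq_zero.mp this with h | h
            · exact h
            · exact absurd h (by intro hh; rcases mul_eq_zero.mp hh with h' | h' <;> [exact hma h'; exact hab (by linarith)])
          have hg1 : g 1 = 0 := by
            have : g 1 * m b = 0 := by linear_combination e1 - m a * hg0
            rcases mul_eq_zero.mp this with h | h
            · exact h
            · exact absurd h hmb
          intro i
          fin_cases i <;> assumption
      calc (3 : ℕ) = Module.finrank ℝ (Submodule.span ℝ (Set.range ![u1, u2, u3])) := by
            rw [finrank_span_eq_card hind]; simp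
        _ ≤ Module.finrank ℝ (LinearMap.range (Phi m q)) := by
            apply Submodule.finrank_mono
            rw [Submodule.span_le]
            rintro x ⟨i, rfl⟩
            fin_cases i <;> assumption
  have hrn := LinearMap.finrank_range_add_finrank_ker (Phi m q)
  rw [finrank_conf, hrange] at hrn
  omega

lemma lower_bound {n : ℕ} (m : Fin n → ℝ) (hm : ∀ i, 0 < m i) (q : Conf n)
    {a b c : Fin n} (hD : D3 q a b c ≠ 0) :
    2 * n - 3 ≤ Module.finrank ℝ
      (Submodule.span ℝ {v : Conf n | ∃ i j : Fin n, i < j ∧ v = twist m q i j}) := by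
  classical
  set S := Submodule.span ℝ {v : Conf n | ∃ i j : Fin n, i < j ∧ v = twist m q i j} with hS
  -- index distinctness
  have hab : a ≠ b := by rintro rfl; apply hD; unfold D3; ring
  have hac : a ≠ c := by rintro rfl; apply hD; unfold D3; ring
  have hbc : b ≠ c := by rintro rfl; apply hD; unfold D3; ring
  -- membership helper
  have hmem : ∀ u v : Fin n, u ≠ v → twist m q u v ∈ S := by
    intro u v huv
    rcases lt_or_gt_of_ne huv with h | h
    · exact Submodule.subset_span ⟨u, v, h, rfl⟩
    · have hc : twist m q u v = twist m q v u := by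
        funext k
        by_cases h1 : k = u
        · subst h1
          rw [twist_self1, twist_self2 _ _ huv.symm.symm]
          unfold pt; congr 1; funext t; fin_cases t <;> simp <;> ring
        · by_cases h2 : k = v
          · subst h2
            rw [twist_self2 _ _ huv.symm, twist_self1]
            unfold pt; congr 1; funext t; fin_cases t <;> simp <;> ring
          · rw [twist_other _ _ h1 h2, twist_other _ _ h2 h1]
      rw [hc]
      exact Submodule.subset_span ⟨v, u, h, rfl⟩
  -- choice of good pair for each k
  have hP : ∀ k : Fin n, ∃ p r : Fin n,
      ((p = a ∧ r = b) ∨ (p = a ∧ r = c) ∨ (p = b ∧ r = c)) ∧ D3 q k p r ≠ 0 := by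
    intro k
    by_cases h1 : D3 q k a b ≠ 0
    · exact ⟨a, b, Or.inl ⟨rfl, rfl⟩, h1⟩
    by_cases h2 : D3 q k a c ≠ 0
    · exact ⟨a, c, Or.inr (Or.inl ⟨rfl, rfl⟩), h2⟩
    push_neg at h1 h2
    refine ⟨b, c, Or.inr (Or.inr ⟨rfl, rfl⟩), ?_⟩
    intro h3
    apply hD
    unfold D3 at *
    linear_combination h1 - h2 + h3
  choose p r hpr hD3 using hP
  -- index type
  let κ := {k : Fin n // k ≠ a ∧ k ≠ b ∧ k ≠ c}
  let ι := Fin 3 ⊕ κ × Fin 2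
  let F : ι → Conf n := Sum.elim
    ![twist m q a b, twist m q a c, twist m q b c]
    (fun x => twist m q (if x.2 = 0 then p x.1.1 else r x.1.1) x.1.1)
  have hpk : ∀ k : κ, p k.1 ≠ k.1 ∧ r k.1 ≠ k.1
      ∧ (p k.1 = a ∨ p k.1 = b ∨ p k.1 = c) ∧ (r k.1 = a ∨ r k.1 = b ∨ r k.1 = c) := by
    intro k
    obtain ⟨hk1, hk2, hk3⟩ := k.2
    rcases hpr k.1 with ⟨h1, h2⟩ | ⟨h1, h2⟩ | ⟨h1, h2⟩ <;>
      rw [h1, h2] <;>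
      exact ⟨Ne.symm (by assumption), Ne.symm (by assumption), by tauto, by tauto⟩
  have hmemF : ∀ i : ι, F i ∈ S := by
    rintro (x | ⟨k, s⟩)
    · fin_cases x
      · exact hmem a b hab
      · exact hmem a c hac
      · exact hmem b c hbc
    · obtain ⟨h1, h2, _, _⟩ := hpk k
      by_cases hs : s = 0 <;> simp only [F, Sum.elim_inr, hs, if_true, if_false, reduceIte]
      · exact hmem _ _ h1
      · exact hmem _ _ h2
  have hind : LinearIndependent ℝ F := by
    rw [Fintype.linearIndependent_iff]
    intro g hg
    have hE : ∀ (k0 : Fin n) (t : Fin 2), ∑ i : ι, g i * F i k0 t = 0 := by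
      intro k0 t
      have h1 := congrArg (ev k0 t) hg
      rw [map_sum, map_zero] at h1
      simp only [map_smul, smul_eq_mul] at h1
      exact h1
    have reduce : ∀ (k : κ) (t : Fin 2),
        g (Sum.inr (k, 0)) * (twist m q (p k.1) k.1 k.1 t)
        + g (Sum.inr (k, 1)) * (twist m q (r k.1) k.1 k.1 t) = 0 := by
      intro k t
      obtain ⟨hk1, hk2, hk3⟩ := k.2
      have e := hE k.1 t
      rw [Fintype.sum_sum_type] at e
      have hfirst : ∑ x : Fin 3, g (Sum.inl x) * F (Sum.inl x) k.1 t = 0 := by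
        rw [Fin.sum_univ_three]
        simp only [F, Sum.elim_inl, Matrix.cons_val_zero, Matrix.cons_val_one,
          Matrix.head_cons, Matrix.cons_val_two, Matrix.tail_cons]
        rw [twist_other m q hk1 hk2, twist_other m q hk1 hk3, twist_other m q hk2 hk3]
        simp
      rw [hfirst, zero_add, Fintype.sum_prod_type, Finset.sum_eq_single k] at e
      · rw [Fin.sum_univ_two] at e
        simpa only [F, Sum.elim_inr, if_true, one_ne_zero, if_false, reduceIte] using e
      · intro x _ hx
        apply Finset.sum_eq_zero
        intro s _
        have hz : twist m q (if s = 0 then p x.1 else r x.1) x.1 k.1 t = 0 := by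
          have hxk : k.1 ≠ x.1 := fun h => hx (Subtype.ext h.symm)
          have hpr1 : k.1 ≠ (if s = 0 then p x.1 else r x.1) := by
            obtain ⟨_, _, hpabc, hrabc⟩ := hpk x
            split_ifs
            · rcases hpabc with h|h|h <;> rw [h] <;> assumption
            · rcases hrabc with h|h|h <;> rw [h] <;> assumption
          rw [twist_other _ _ hpr1 hxk]
          rfl
        simp only [F, Sum.elim_inr, hz]
        simp
      · intro h
        exact absurd (Finset.mem_univ k) h
    have hg2 : ∀ (y : κ × Fin 2), g (Sum.inr y) = 0 := by
      rintro ⟨k, s⟩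
      obtain ⟨hp1, hr1, _, _⟩ := hpk k
      have e0 := reduce k 0
      have e1 := reduce k 1
      rw [twist_self2 _ _ (Ne.symm hp1), twist_self2 _ _ (Ne.symm hr1)] at e0 e1
      simp only [pt_zero, pt_one, zero_app, mul_zero, add_zero] at e0 e1
      have hd : (-(m (p k.1) * (q (p k.1) 1 - q k.1 1))) * (m (r k.1) * (q (r k.1) 0 - q k.1 0))
          - (m (p k.1) * (q (p k.1) 0 - q k.1 0)) * (-(m (r k.1) * (q (r k.1) 1 - q k.1 1))) ≠ 0 := by
        have heq : (-(m (p k.1) * (q (p k.1) 1 - q k.1 1))) * (m (r k.1) * (q (r k.1) 0 - q k.1 0))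
            - (m (p k.1) * (q (p k.1) 0 - q k.1 0)) * (-(m (r k.1) * (q (r k.1) 1 - q k.1 1)))
            = m (p k.1) * (m (r k.1) * D3 q k.1 (p k.1) (r k.1)) := by unfold D3; ring
        rw [heq]
        exact mul_ne_zero (hm _).ne' (mul_ne_zero (hm _).ne' (hD3 k.1))
      obtain ⟨hs0, hs1⟩ := solve2 hd e0 e1
      fin_cases s
      · exact hs0
      · exact hs1
    have habc : ∀ (k0 : Fin n) (t : Fin 2),
        g (Sum.inl 0) * (twist m q a b k0 t) + g (Sum.inl 1) * (twist m q a c k0 t)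
        + g (Sum.inl 2) * (twist m q b c k0 t) = 0 := by
      intro k0 t
      have e := hE k0 t
      rw [Fintype.sum_sum_type] at e
      have hsecond : ∑ y : κ × Fin 2, g (Sum.inr y) * F (Sum.inr y) k0 t = 0 := by
        apply Finset.sum_eq_zero
        intro y _
        rw [hg2 y, zero_mul]
      rw [hsecond, add_zero, Fin.sum_univ_three] at e
      simpa only [F, Sum.elim_inl, Matrix.cons_val_zero, Matrix.cons_val_one,
        Matrix.head_cons, Matrix.cons_val_two, Matrix.tail_cons] using e
    have e0 := habc a 0
    have e1 := habc a 1
    rw [twist_self1, twist_self1, twist_other m q hab hac] at e0 e1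
    simp only [pt_zero, pt_one, zero_app, mul_zero, add_zero] at e0 e1
    have hd : (m b * (q a 1 - q b 1)) * (-(m c * (q a 0 - q c 0)))
        - (-(m b * (q a 0 - q b 0))) * (m c * (q a 1 - q c 1)) ≠ 0 := by
      have heq : (m b * (q a 1 - q b 1)) * (-(m c * (q a 0 - q c 0)))
          - (-(m b * (q a 0 - q b 0))) * (m c * (q a 1 - q c 1))
          = m b * (m c * D3 q a b c) := by unfold D3; ring
      rw [heq]
      exact mul_ne_zero (hm _).ne' (mul_ne_zero (hm _).ne' hD)
    obtain ⟨hs0, hs1⟩ := solve2 hd e0 e1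
    have f0 := habc b 0
    have f1 := habc b 1
    rw [twist_self2 m q (Ne.symm hab), twist_other m q (Ne.symm hab) hbc, twist_self1] at f0 f1
    simp only [pt_zero, pt_one, zero_app, mul_zero, hs0, hs1, zero_mul, zero_add, add_zero] at f0 f1
    have hbcq : q b 0 ≠ q c 0 ∨ q b 1 ≠ q c 1 := by
      by_contra hcon
      push_neg at hcon
      apply hD
      unfold D3
      rw [hcon.1, hcon.2]
      ring
    have hs2 : g (Sum.inl 2) = 0 := by
      rcases hbcq with h | h
      · rcases mul_eq_zero.mp f1 with h' | h'
        · exact h'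
        · exfalso
          rw [neg_eq_zero] at h'
          rcases mul_eq_zero.mp h' with h2 | h2
          · exact (hm c).ne' h2
          · exact h (by linarith)
      · rcases mul_eq_zero.mp f0 with h' | h'
        · exact h'
        · exfalso
          rcases mul_eq_zero.mp h' with h2 | h2
          · exact (hm c).ne' h2
          · exact h (by linarith)
    rintro (x | y)
    · fin_cases x
      · exact hs0
      · exact hs1
      · exact hs2
    · exact hg2 y
  -- cardinality
  have hcardabc : ({a, b, c} : Finset (Fin n)).card = 3 := by
    rw [Finset.card_insert_of_notMem (by simp [hab, hac]),
      Finset.card_insert_of_notMem (by simp [hbc]), Finset.card_singleton]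
  have hκ : Fintype.card κ = n - 3 := by
    have h1 : Fintype.card κ = (Finset.univ.filter fun k : Fin n => k ≠ a ∧ k ≠ b ∧ k ≠ c).card :=
      Fintype.card_subtype _
    have h2 : (Finset.univ.filter fun k : Fin n => k ≠ a ∧ k ≠ b ∧ k ≠ c)
        = ({a, b, c} : Finset (Fin n))ᶜ := by
      ext k
      simp [not_or]
    rw [h1, h2, Finset.card_compl, hcardabc, Fintype.card_fin]
  have hn3 : 3 ≤ n := by
    have h := Finset.card_le_univ ({a, b, c} : Finset (Fin n))
    rw [hcardabc] at h
    simpa using h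
  have hcard : Fintype.card ι = 2 * n - 3 := by
    have : Fintype.card ι = 3 + (n - 3) * 2 := by
      simp [ι, Fintype.card_sum, Fintype.card_prod, hκ, Fintype.card_fin]
    rw [this]
    omega
  have hfinal : Fintype.card ι ≤ Module.finrank ℝ S := by
    let F' : ι → S := fun i => ⟨F i, hmemF i⟩
    have hind' : LinearIndependent ℝ F' :=
      LinearIndependent.of_comp S.subtype hind
    exact hind'.fintype_card_le_finrank
  rw [hcard] at hfinal
  exact hfinal


end AuxTwist

/-- If the `n ≥ 2` points (with positive masses) are not all collinear, the span of the
twist vectors `v_{i,j}` for `i < j` has dimension exactly `2n - 3`. -/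
theorem twist_span_dim_noncollinear (n : ℕ) (hn : 2 ≤ n)
    (m : Fin n → ℝ) (hm : ∀ i, 0 < m i) (q : Conf n)
    (hq : ¬ Collinear ℝ (Set.range q)) :
    Module.finrank ℝ
      (Submodule.span ℝ {v : Conf n | ∃ i j : Fin n, i < j ∧ v = twist m q i j}) =
      2 * n - 3 := by
  obtain ⟨a, b, c, hD⟩ := exists_triple q hn hq
  have hD' : D3 q a b c ≠ 0 := hD
  have hlow := lower_bound m hm q hD'
  have habq : q a 0 ≠ q b 0 ∨ q a 1 ≠ q b 1 := by
    by_contra hcon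
    push_neg at hcon
    apply hD'
    unfold D3
    rw [hcon.1, hcon.2]
    ring
  have hupp : Module.finrank ℝ
      (Submodule.span ℝ {v : Conf n | ∃ i j : Fin n, i < j ∧ v = twist m q i j}) ≤ 2 * n - 3 := by
    rw [← finrank_ker m hm q habq]
    apply Submodule.finrank_mono
    rw [Submodule.span_le]
    rintro v ⟨i, j, hij, rfl⟩
    exact Phi_twist m q hij.ne
  omega
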